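/- The volume formula for the m = 2 case is symmetric in the two constraints: under the assumptions a_j b_j ≠ 0, a_j ≠ b_j for all j, and a_j/b_j pairwise distinct, the expression 1/∏_j b_j − ∑_{j : a_j > b_j} (a_j−b_j)^n/(a_j b_j ∏_{k≠j}(b_k a_j − a_k b_j)) equals 1/∏_j a_j − ∑_{j : b_j > a_j} (b_j−a_j)^n/(a_j b_j ∏_{k≠j}(a_k b_j − b_k a_j)). -/

import Mathlib

open Finset

open Polynomial in
lemma sum_inv_prod_sub {ι : Type*} [DecidableEq ι] (s : Finset ι) (v : ι → ℝ)
    (hvs : Set.InjOn v s) (hs : 2 ≤ s.card) :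
    ∑ i ∈ s, (∏ j ∈ s.erase i, (v i - v j))⁻¹ = 0 := by
  have hb := Lagrange.sum_basis hvs (card_pos.mp (by omega))
  have hcoeff := congrArg (fun p => Polynomial.coeff p (s.card - 1)) hb
  simp only [finset_sum_coeff] at hcoeff
  have hone : (1 : ℝ[X]).coeff (s.card - 1) = 0 := by
    rw [Polynomial.coeff_one, if_neg (by omega)]
  rw [hone] at hcoeff
  rw [← hcoeff]
  refine sum_congr rfl fun i hi => ?_
  have hbasis : Lagrange.basis s v i =
      C (∏ j ∈ s.erase i, (v i - v j)⁻¹) * ∏ j ∈ s.erase i, (X - C (v j)) := by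
    rw [Lagrange.basis, map_prod, ← prod_mul_distrib]
    exact prod_congr rfl fun j hj => rfl
  rw [hbasis, coeff_C_mul]
  have hmon : (∏ j ∈ s.erase i, (X - C (v j))).Monic :=
    monic_prod_of_monic _ _ fun j _ => monic_X_sub_C _
  have hdeg : (∏ j ∈ s.erase i, (X - C (v j))).natDegree = s.card - 1 := by
    rw [natDegree_prod _ _ (fun j _ => X_sub_C_ne_zero (v j))]
    simp [card_erase_of_mem hi]
  rw [← hdeg, hmon.coeff_natDegree, mul_one, ← prod_inv_distrib]

lemma two_point_residue (n : ℕ) (u v : ℝ) (z : Fin n → ℝ) (huv : u ≠ v)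
    (hzu : ∀ j, z j ≠ u) (hzv : ∀ j, z j ≠ v) (hz : Function.Injective z) :
    ((u - v) * ∏ j, (u - z j))⁻¹ + ((v - u) * ∏ j, (v - z j))⁻¹
      + ∑ j, ((z j - u) * ((z j - v) * ∏ k ∈ univ.erase j, (z j - z k)))⁻¹ = 0 := by
  set w : Bool ⊕ Fin n → ℝ := Sum.elim (fun c => bif c then v else u) z with hw
  have hinj : Function.Injective w := by
    rintro (c₁ | j₁) (c₂ | j₂) h <;> simp only [hw, Sum.elim_inl, Sum.elim_inr] at h
    · cases c₁ <;> cases c₂ <;> simp only [cond_true, cond_false] at h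
      · rfl
      · exact absurd h huv
      · exact absurd h.symm huv
      · rfl
    · cases c₁
      · exact absurd h.symm (hzu j₂)
      · exact absurd h.symm (hzv j₂)
    · cases c₂
      · exact absurd h (hzu j₁)
      · exact absurd h (hzv j₁)
    · exact congrArg Sum.inr (hz h)
  have key := sum_inv_prod_sub (univ : Finset (Bool ⊕ Fin n)) w
    (hinj.injOn) (by simp [card_univ])
  have herase_inl : ∀ c : Bool, (univ : Finset (Bool ⊕ Fin n)).erase (Sum.inl c)
      = (univ.erase c).disjSum univ := by
    intro c; ext x; cases x <;> simp
  have herase_inr : ∀ j : Fin n, (univ : Finset (Bool ⊕ Fin n)).erase (Sum.inr j)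
      = (univ : Finset Bool).disjSum (univ.erase j) := by
    intro j; ext x; cases x <;> simp
  have heb : ∀ c : Bool, (univ : Finset Bool).erase c = {!c} := by decide
  rw [Fintype.sum_sum_type] at key
  simp only [herase_inl, herase_inr, prod_disjSum, heb] at key
  rw [Fintype.sum_bool] at key
  simp only [hw, Sum.elim_inl, Sum.elim_inr, prod_singleton, Bool.not_true, Bool.not_false,
    cond_true, cond_false, Fintype.prod_bool] at key
  have hsum : ∑ j, ((z j - u) * ((z j - v) * ∏ k ∈ univ.erase j, (z j - z k)))⁻¹
      = ∑ j, ((z j - v) * (z j - u) * ∏ k ∈ univ.erase j, (z j - z k))⁻¹ :=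
    sum_congr rfl fun j _ => congrArg Inv.inv (by ring)
  rw [hsum]
  linarith [key]

theorem stmt_12 (n : ℕ) (a b : Fin n → ℝ)
    (hab : ∀ j, a j * b j ≠ 0) (hne : ∀ j, a j ≠ b j)
    (hratio : ∀ j k, j ≠ k → a j / b j ≠ a k / b k) :
    1 / ∏ j, b j -
        ∑ j ∈ univ.filter (fun j => b j < a j),
          (a j - b j) ^ n /
            (a j * b j * ∏ k ∈ univ.erase j, (b k * a j - a k * b j))
      = 1 / ∏ j, a j -
          ∑ j ∈ univ.filter (fun j => a j < b j),
            (b j - a j) ^ n /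
              (a j * b j * ∏ k ∈ univ.erase j, (a k * b j - b k * a j)) := by
  rcases n with _ | m
  · simp
  have ha : ∀ j, a j ≠ 0 := fun j => left_ne_zero_of_mul (hab j)
  have hb : ∀ j, b j ≠ 0 := fun j => right_ne_zero_of_mul (hab j)
  have hd : ∀ j, b j - a j ≠ 0 := fun j => sub_ne_zero.mpr fun h => hne j h.symm
  have hd' : ∀ j, a j - b j ≠ 0 := fun j => sub_ne_zero.mpr (hne j)
  have hcross : ∀ j k, j ≠ k → b k * a j - a k * b j ≠ 0 := by
    intro j k hjk h
    apply hratio j k hjk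
    rw [div_eq_div_iff (hb j) (hb k)]
    have := sub_eq_zero.mp h
    linarith
  have hNe : ∀ j : Fin (m + 1), ∏ k ∈ univ.erase j, (b k * a j - a k * b j) ≠ 0 :=
    fun j => prod_ne_zero_iff.mpr fun k hk => hcross j k (Ne.symm (mem_erase.mp hk).1)
  have hM : ∀ j : Fin (m + 1), ∏ k ∈ univ.erase j, (a k * b j - b k * a j)
      = (-1 : ℝ) ^ m * ∏ k ∈ univ.erase j, (b k * a j - a k * b j) := by
    intro j
    calc ∏ k ∈ univ.erase j, (a k * b j - b k * a j)
        = ∏ k ∈ univ.erase j, (-1 : ℝ) * (b k * a j - a k * b j) :=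
          prod_congr rfl fun k _ => by ring
      _ = (-1 : ℝ) ^ m * ∏ k ∈ univ.erase j, (b k * a j - a k * b j) := by
          rw [prod_mul_distrib, prod_const, card_erase_of_mem (mem_univ j), card_univ,
            Fintype.card_fin, Nat.add_sub_cancel]
  set z : Fin (m + 1) → ℝ := fun j => b j / (b j - a j) with hzdef
  have hz0 : ∀ j, z j ≠ 0 := fun j => div_ne_zero (hb j) (hd j)
  have hz1 : ∀ j, z j ≠ 1 := by
    intro j h
    have h2 : b j = b j - a j := (div_eq_one_iff_eq (hd j)).mp h
    exact ha j (by linarith)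
  have hzinj : Function.Injective z := by
    intro j k h
    by_contra hjk
    have h2 : b j * (b k - a k) = b k * (b j - a j) := (div_eq_div_iff (hd j) (hd k)).mp h
    exact hcross j k hjk (by linear_combination h2)
  have key := two_point_residue (m + 1) 0 1 z (by norm_num) hz0 hz1 hzinj
  set Cp : ℝ := ∏ j, (a j - b j) with hCp
  have hCne : Cp ≠ 0 := prod_ne_zero_iff.mpr fun j _ => hd' j
  have hPa : (∏ j, a j) ≠ 0 := prod_ne_zero_iff.mpr fun j _ => ha j
  have hPb : (∏ j, b j) ≠ 0 := prod_ne_zero_iff.mpr fun j _ => hb j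
  have hzj1 : ∀ j, z j - 1 = a j / (b j - a j) := by
    intro j
    simp only [hzdef]
    rw [div_sub_one (hd j), sub_sub_cancel]
  have h0 : ((0 : ℝ) - 1) * ∏ j, (0 - z j) = -(∏ j, b j) / Cp := by
    have hf : ∀ j, (0 : ℝ) - z j = b j / (a j - b j) := by
      intro j
      simp only [hzdef]
      rw [zero_sub, show a j - b j = -(b j - a j) from by ring, div_neg]
    rw [prod_congr rfl fun j _ => hf j, prod_div_distrib, hCp]
    ring
  have h1 : ((1 : ℝ) - 0) * ∏ j, (1 - z j) = (∏ j, a j) / Cp := by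
    have hf : ∀ j, (1 : ℝ) - z j = a j / (a j - b j) := by
      intro j
      rw [show (1 : ℝ) - z j = -(z j - 1) from by ring, hzj1 j,
        show a j - b j = -(b j - a j) from by ring, div_neg]
    rw [prod_congr rfl fun j _ => hf j, prod_div_distrib, hCp]
    ring
  have hterm : ∀ j : Fin (m + 1),
      ((z j - 0) * ((z j - 1) * ∏ k ∈ univ.erase j, (z j - z k)))⁻¹
        = -Cp * ((b j - a j) ^ (m + 1) /
            (a j * b j * ∏ k ∈ univ.erase j, (a k * b j - b k * a j))) := by
    intro j
    have hzj : z j - 0 = b j / (b j - a j) := by rw [sub_zero]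
    have hprod : ∏ k ∈ univ.erase j, (z j - z k)
        = (∏ k ∈ univ.erase j, (a k * b j - b k * a j))
          / ((b j - a j) ^ m * ∏ k ∈ univ.erase j, (a k - b k)) := by
      have hfac : ∀ k ∈ univ.erase j, z j - z k
          = (a k * b j - b k * a j) / ((b j - a j) * (a k - b k)) := by
        intro k _
        simp only [hzdef]
        rw [div_sub_div _ _ (hd j) (hd k),
          div_eq_div_iff (mul_ne_zero (hd j) (hd k)) (mul_ne_zero (hd j) (hd' k))]
        ring
      rw [prod_congr rfl hfac, prod_div_distrib, prod_mul_distrib, prod_const,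
        card_erase_of_mem (mem_univ j), card_univ, Fintype.card_fin, Nat.add_sub_cancel]
    have hCE : Cp = (a j - b j) * ∏ k ∈ univ.erase j, (a k - b k) := by
      rw [hCp]
      exact (mul_prod_erase univ (fun k => a k - b k) (mem_univ j)).symm
    have hEne : ∏ k ∈ univ.erase j, (a k - b k) ≠ 0 :=
      prod_ne_zero_iff.mpr fun k _ => hd' k
    have hMne : ∏ k ∈ univ.erase j, (a k * b j - b k * a j) ≠ 0 := by
      rw [hM j]
      exact mul_ne_zero (pow_ne_zero m (by norm_num)) (hNe j)
    rw [hzj, hzj1 j, hprod, hCE]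
    field_simp
    ring
  have hsum : ∑ j, ((z j - 0) * ((z j - 1) * ∏ k ∈ univ.erase j, (z j - z k)))⁻¹
      = -Cp * ∑ j, (b j - a j) ^ (m + 1) /
          (a j * b j * ∏ k ∈ univ.erase j, (a k * b j - b k * a j)) := by
    rw [mul_sum]
    exact sum_congr rfl fun j _ => hterm j
  rw [h0, h1, hsum] at key
  have hA : ((-(∏ j, b j)) / Cp)⁻¹ = -(Cp / ∏ j, b j) := by rw [inv_div, div_neg]
  have hB : ((∏ j, a j) / Cp)⁻¹ = Cp / ∏ j, a j := by rw [inv_div]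
  rw [hA, hB] at key
  have main : ∑ j, (b j - a j) ^ (m + 1) /
        (a j * b j * ∏ k ∈ univ.erase j, (a k * b j - b k * a j))
      = 1 / ∏ j, a j - 1 / ∏ j, b j := by
    have h2 : -Cp * ∑ j, (b j - a j) ^ (m + 1) /
        (a j * b j * ∏ k ∈ univ.erase j, (a k * b j - b k * a j))
        = -Cp * (1 / ∏ j, a j - 1 / ∏ j, b j) := by
      have h3 : -Cp * (1 / ∏ j, a j - 1 / ∏ j, b j)
          = Cp / ∏ j, b j - Cp / ∏ j, a j := by
        rw [neg_mul, mul_sub, mul_one_div, mul_one_div, neg_sub]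
      rw [h3]
      linarith
    exact mul_left_cancel₀ (neg_ne_zero.mpr hCne) h2
  have hfilter : univ.filter (fun j => ¬ a j < b j) = univ.filter (fun j => b j < a j) := by
    apply filter_congr
    intro j _
    simp only [not_lt, eq_iff_iff]
    exact ⟨fun h => h.lt_of_ne fun e => hne j e.symm, le_of_lt⟩
  have hsplit := sum_filter_add_sum_filter_not univ (fun j => a j < b j)
    (fun j => (b j - a j) ^ (m + 1) /
      (a j * b j * ∏ k ∈ univ.erase j, (a k * b j - b k * a j)))
  rw [hfilter] at hsplit
  have hneg : ∑ j ∈ univ.filter (fun j => b j < a j),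
      (b j - a j) ^ (m + 1) / (a j * b j * ∏ k ∈ univ.erase j, (a k * b j - b k * a j))
      = -∑ j ∈ univ.filter (fun j => b j < a j),
        (a j - b j) ^ (m + 1) / (a j * b j * ∏ k ∈ univ.erase j, (b k * a j - a k * b j)) := by
    rw [← sum_neg_distrib]
    refine sum_congr rfl fun j _ => ?_
    rw [hM j,
      show (b j - a j) ^ (m + 1) = (-1 : ℝ) ^ m * (-((a j - b j) ^ (m + 1))) from by
        rw [show b j - a j = -(a j - b j) from by ring, neg_pow]; ring,
      show a j * b j * ((-1 : ℝ) ^ m * ∏ k ∈ univ.erase j, (b k * a j - a k * b j))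
          = (-1 : ℝ) ^ m * (a j * b j * ∏ k ∈ univ.erase j, (b k * a j - a k * b j)) from by
        ring,
      mul_div_mul_left _ _ (pow_ne_zero m (by norm_num : (-1 : ℝ) ≠ 0)), neg_div]
  rw [hneg, main] at hsplit
  linarith [hsplit]
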